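/- Let n ≥ 1, let λ : Fin n → ℤ be a weight such that i ↦ λ i + ρ i is injective, and let σ be a permutation of Fin n such that σ • λ is non-increasing. Then the number of inversions of σ, i.e. the cardinality of {(i, j) : i < j and σ i > σ j}, equals the cardinality of {(i, j) : i < j and λ i + ρ i < λ j + ρ j}. -/

import Mathlib

/-- The shifted half sum of positive roots of `GL(n)`: `ρ i = (n - 1) - i`. -/
def rho (n : ℕ) : Fin n → ℤ := fun i => ((n : ℤ) - 1) - (i : ℤ)

/-- The dot action of a permutation on a `GL(n)`-weight:
`(σ • λ) i = λ (σ⁻¹ i) + ρ (σ⁻¹ i) - ρ i`, i.e. `σ • λ = σ(λ + ρ) - ρ`. -/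
def dotAct {n : ℕ} (σ : Equiv.Perm (Fin n)) (l : Fin n → ℤ) : Fin n → ℤ :=
  fun i => l (σ⁻¹ i) + rho n (σ⁻¹ i) - rho n i

/-- If `λ + ρ` is injective and `σ • λ` is dominant, then the length (number of
inversions) of `σ` equals the number of pairs `i < j` with
`(λ + ρ) i < (λ + ρ) j`. -/
theorem length_of_dominant_perm (n : ℕ) (hn : 1 ≤ n) (l : Fin n → ℤ)
    (σ : Equiv.Perm (Fin n))
    (hinj : Function.Injective (fun i : Fin n => l i + rho n i))
    (hdom : ∀ i j : Fin n, i ≤ j → dotAct σ l j ≤ dotAct σ l i) :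
    (Finset.univ.filter
        (fun p : Fin n × Fin n => p.1 < p.2 ∧ σ p.2 < σ p.1)).card =
    (Finset.univ.filter
        (fun p : Fin n × Fin n =>
          p.1 < p.2 ∧ l p.1 + rho n p.1 < l p.2 + rho n p.2)).card := by
  -- μ ∘ σ⁻¹ is strictly decreasing
  have key : ∀ a b : Fin n, σ a < σ b → l b + rho n b < l a + rho n a := by
    intro a b hab
    have h := hdom (σ a) (σ b) hab.le
    have hrho : rho n (σ b) < rho n (σ a) := by
      simp only [rho]
      have : ((σ a : Fin n) : ℤ) < ((σ b : Fin n) : ℤ) := by exact_mod_cast hab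
      omega
    simp only [dotAct, Equiv.Perm.inv_def, Equiv.symm_apply_apply] at h
    omega
  have iff1 : ∀ p : Fin n × Fin n, p.1 ≠ p.2 →
      (σ p.2 < σ p.1 ↔ l p.1 + rho n p.1 < l p.2 + rho n p.2) := by
    intro p hne
    constructor
    · exact key p.2 p.1
    · intro hlt
      rcases lt_trichotomy (σ p.1) (σ p.2) with h | h | h
      · exact absurd (key p.1 p.2 h) (by omega)
      · exact absurd (σ.injective h) hne
      · exact h
  congr 1
  apply Finset.filter_congr
  intro p _
  constructor
  · rintro ⟨h1, h2⟩
    exact ⟨h1, (iff1 p h1.ne).mp h2⟩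
  · rintro ⟨h1, h2⟩
    exact ⟨h1, (iff1 p h1.ne).mpr h2⟩
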